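/- Let G be a finite simple graph and xy an edge of G. Let G' be the graph obtained from G by deleting the edge xy (keeping all vertices). Then for every integer s ≥ 1, as ideals of the polynomial ring, I(G)^{(s)} + (xy) = I(G')^{(s)} + (xy). -/

import Mathlib

open MvPolynomial

/-! ### Symbolic powers -/

/-- The `s`-th symbolic power of an ideal `I`:
`I^{(s)} = ⋂_{p ∈ Min(I)} Ker(R → (R/I^s)_p)`. -/
noncomputable def symbolicPower {R : Type} [CommRing R] (I : Ideal R) (s : ℕ) : Ideal R :=
  ⨅ p : {p : Ideal R // p ∈ I.minimalPrimes},
    haveI : p.1.IsPrime := p.2.1.1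
    RingHom.ker ((algebraMap (R ⧸ I ^ s)
        (Localization (Submonoid.map (Ideal.Quotient.mk (I ^ s)) p.1.primeCompl))).comp
      (Ideal.Quotient.mk (I ^ s)))

/-! ### Edge ideals and graph notions -/

/-- The edge ideal of a graph on vertex set `Fin n`, inside `K[x_1, …, x_n]`. -/
noncomputable def edgeIdeal (K : Type) [Field K] {n : ℕ} (G : SimpleGraph (Fin n)) :
    Ideal (MvPolynomial (Fin n) K) :=
  Ideal.span {m | ∃ i j : Fin n, G.Adj i j ∧ m = X i * X j}

/-- The edge sets of cycles of `G`. -/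
def cycleEdgeSets {V : Type} (G : SimpleGraph V) : Set (Set (Sym2 V)) :=
  {E' | ∃ (v : V) (w : G.Walk v v), w.IsCycle ∧ E' = {e | e ∈ w.edges}}

/-- A graph is unicyclic if it contains exactly one cycle as a subgraph. -/
def IsUnicyclic {V : Type} (G : SimpleGraph V) : Prop :=
  ∃! E', E' ∈ cycleEdgeSets G

/-- The graph `G \ U`: delete the vertices of `U` and all edges meeting `U`. -/
def deleteVertices {V : Type} (G : SimpleGraph V) (U : Set V) : SimpleGraph V where
  Adj a b := G.Adj a b ∧ a ∉ U ∧ b ∉ U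
  symm := ⟨fun _ _ ⟨h, ha, hb⟩ => ⟨h.symm, hb, ha⟩⟩
  loopless := ⟨fun a ⟨h, _, _⟩ => G.loopless.irrefl a h⟩

/-- The distance `d_G(x, W)` from a vertex to a set of vertices. -/
noncomputable def distToSet {V : Type} (G : SimpleGraph V) (x : V) (W : Set V) : ℕ :=
  sInf (G.dist x '' W)

/-- `x` is a leaf of `G`, i.e. a vertex of degree one. -/
def IsLeaf {V : Type} (G : SimpleGraph V) (x : V) : Prop :=
  ∃ y, G.neighborSet x = {y}

/-- `M` is an induced matching of `G`: a set of pairwise disjoint edges such that no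
edge of `E(G) \ M` is contained in the union of two edges of `M`. -/
def IsInducedMatching {V : Type} (G : SimpleGraph V) (M : Set (Sym2 V)) : Prop :=
  M ⊆ G.edgeSet ∧
  (∀ e ∈ M, ∀ f ∈ M, e ≠ f → ∀ v : V, ¬(v ∈ e ∧ v ∈ f)) ∧
  (∀ g ∈ G.edgeSet, g ∉ M → ∀ e ∈ M, ∀ f ∈ M, ¬(∀ v : V, v ∈ g → v ∈ e ∨ v ∈ f))

/-- The induced matching number `ν(G)`. -/
noncomputable def inducedMatchingNumber {V : Type} (G : SimpleGraph V) : ℕ :=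
  sSup {k : ℕ | ∃ M : Set (Sym2 V), IsInducedMatching G M ∧ M.ncard = k}

/-- `A` is a vertex cover of `G`. -/
def IsVertexCover {V : Type} (G : SimpleGraph V) (A : Set V) : Prop :=
  ∀ ⦃u v : V⦄, G.Adj u v → u ∈ A ∨ v ∈ A

/-- `A` is a minimal vertex cover of `G`. -/
def IsMinimalVertexCover {V : Type} (G : SimpleGraph V) (A : Set V) : Prop :=
  IsVertexCover G A ∧ ∀ B ⊂ A, ¬ IsVertexCover G B

/-! ### Castelnuovo–Mumford regularity -/

/-- An element `f` of a twisted graded free module `⊕_{e : σ} S(-deg e)` over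
`S = K[x_1, …, x_n]` is homogeneous of degree `d` iff each component `f e` is a
homogeneous polynomial of degree `d - deg e`. -/
def IsHomogElem {K : Type} [Field K] {n : ℕ} {σ : Type} (deg : σ → ℕ)
    (f : σ →₀ MvPolynomial (Fin n) K) (d : ℕ) : Prop :=
  ∀ e : σ, if deg e ≤ d then f e ∈ homogeneousSubmodule (Fin n) K (d - deg e) else f e = 0

/-- A graded free resolution of an ideal `I ⊆ S = K[x_1, …, x_n]` by finitely generated
twisted graded free modules `F i = ⊕_{e : σ i} S(-deg i e)`, with degree-preserving
differentials, exact, and with augmentation onto `I`. -/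
structure GradedFreeResolution (K : Type) [Field K] (n : ℕ)
    (I : Ideal (MvPolynomial (Fin n) K)) where
  σ : ℕ → Type
  fin : ∀ i, Fintype (σ i)
  deg : ∀ i, σ i → ℕ
  aug : (σ 0 →₀ MvPolynomial (Fin n) K) →ₗ[MvPolynomial (Fin n) K] MvPolynomial (Fin n) K
  d : ∀ i, (σ (i + 1) →₀ MvPolynomial (Fin n) K) →ₗ[MvPolynomial (Fin n) K]
        (σ i →₀ MvPolynomial (Fin n) K)
  aug_range : LinearMap.range aug = I
  exact_zero : LinearMap.ker aug = LinearMap.range (d 0)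
  exact : ∀ i, LinearMap.ker (d i) = LinearMap.range (d (i + 1))
  aug_graded : ∀ (dd : ℕ) (f : σ 0 →₀ MvPolynomial (Fin n) K),
    IsHomogElem (deg 0) f dd → aug f ∈ homogeneousSubmodule (Fin n) K dd
  d_graded : ∀ (i : ℕ) (dd : ℕ) (f : σ (i + 1) →₀ MvPolynomial (Fin n) K),
    IsHomogElem (deg (i + 1)) f dd → IsHomogElem (deg i) (d i f) dd

/-- The Castelnuovo–Mumford regularity of a homogeneous ideal `I ⊆ K[x_1, …, x_n]`:
the least `r` such that `I` admits a graded free resolution whose `i`-th term is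
generated in degrees `≤ r + i`.  (For finitely generated graded modules this agrees
with the usual definition `max{j - i : β_{i,j} ≠ 0}` via the minimal free resolution.) -/
noncomputable def reg (K : Type) [Field K] (n : ℕ) (I : Ideal (MvPolynomial (Fin n) K)) : ℕ :=
  sInf {r : ℕ | ∃ F : GradedFreeResolution K n I, ∀ (i : ℕ) (e : F.σ i), F.deg i e ≤ r + i}

/-! ### Auxiliary machinery -/

theorem mem_symbolicPower_iff {R : Type} [CommRing R] (I : Ideal R) (s : ℕ) (f : R) :
    f ∈ symbolicPower I s ↔ ∀ p ∈ I.minimalPrimes, ∃ u ∉ p, u * f ∈ I ^ s := by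
  rw [symbolicPower, Ideal.mem_iInf]
  constructor
  · intro h p hp
    haveI : p.IsPrime := hp.1.1
    have := h ⟨p, hp⟩
    rw [RingHom.mem_ker, RingHom.comp_apply,
      IsLocalization.map_eq_zero_iff (Submonoid.map (Ideal.Quotient.mk (I ^ s)) p.primeCompl)] at this
    obtain ⟨⟨m, u, hu, rfl⟩, hm⟩ := this
    refine ⟨u, hu, ?_⟩
    rwa [← map_mul, Ideal.Quotient.eq_zero_iff_mem] at hm
  · intro h p
    haveI : p.1.IsPrime := p.2.1.1
    obtain ⟨u, hu, huf⟩ := h p.1 p.2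
    rw [RingHom.mem_ker, RingHom.comp_apply,
      IsLocalization.map_eq_zero_iff (Submonoid.map (Ideal.Quotient.mk (I ^ s)) p.1.primeCompl)]
    exact ⟨⟨_, u, hu, rfl⟩, by rwa [← map_mul, Ideal.Quotient.eq_zero_iff_mem]⟩

variable {K : Type} [Field K] {n : ℕ}

def wtC (C : Finset (Fin n)) (m : Fin n →₀ ℕ) : ℕ := ∑ i ∈ C, m i

noncomputable def PC (K : Type) [Field K] {n : ℕ} (C : Finset (Fin n)) : Ideal (MvPolynomial (Fin n) K) :=
  Ideal.span (X '' ↑C)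

theorem mem_PC {C : Finset (Fin n)} {f : MvPolynomial (Fin n) K} :
    f ∈ PC K C ↔ ∀ m ∈ f.support, ∃ i ∈ C, (m : Fin n →₀ ℕ) i ≠ 0 :=
  mem_ideal_span_X_image

theorem X_mem_PC {C : Finset (Fin n)} {i : Fin n} :
    (X i : MvPolynomial (Fin n) K) ∈ PC K C ↔ i ∈ C := by
  constructor
  · intro h
    rw [mem_PC] at h
    obtain ⟨j, hj, hne⟩ := h (Finsupp.single i 1) (by simp [support_X])
    rw [Finsupp.single_apply_ne_zero] at hne
    obtain ⟨rfl, -⟩ := hne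
    exact hj
  · intro h
    exact Ideal.subset_span ⟨i, h, rfl⟩

theorem X_eq_monomial' (i : Fin n) :
    (X i : MvPolynomial (Fin n) K) = monomial (Finsupp.single i 1) 1 := by
  rw [← C_mul_X_eq_monomial, C_1, one_mul]

theorem wtC_add (C : Finset (Fin n)) (a b : Fin n →₀ ℕ) : wtC C (a + b) = wtC C a + wtC C b := by
  simp [wtC, Finset.sum_add_distrib]

theorem wtC_mono {C : Finset (Fin n)} {a b : Fin n →₀ ℕ} (h : a ≤ b) : wtC C a ≤ wtC C b :=
  Finset.sum_le_sum fun i _ => h i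

theorem wtC_single {C : Finset (Fin n)} {i : Fin n} (hi : i ∈ C) :
    wtC C (Finsupp.single i 1) = 1 := by
  rw [wtC, Finset.sum_eq_single i (fun j _ hj => Finsupp.single_eq_of_ne' (Ne.symm hj))
    (fun h => absurd hi h)]
  simp

theorem monomial_mem_PC_pow {C : Finset (Fin n)} {d : Fin n →₀ ℕ} {s : ℕ} (h : s ≤ wtC C d) :
    (monomial d (1 : K)) ∈ (PC K C) ^ s := by
  induction s generalizing d with
  | zero => simp
  | succ s ih =>
    have hpos : 0 < wtC C d := lt_of_lt_of_le (Nat.succ_pos s) h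
    obtain ⟨i, hiC, hid⟩ : ∃ i ∈ C, d i ≠ 0 := by
      by_contra hc
      push_neg at hc
      have : wtC C d = 0 := Finset.sum_eq_zero hc
      omega
    have hle : Finsupp.single i 1 ≤ d := by
      rw [Finsupp.single_le_iff]
      omega
    have hd : Finsupp.single i 1 + (d - Finsupp.single i 1) = d := add_tsub_cancel_of_le hle
    have hwt : s ≤ wtC C (d - Finsupp.single i 1) := by
      have := wtC_add C (Finsupp.single i 1) (d - Finsupp.single i 1)
      rw [hd, wtC_single hiC] at this
      omega
    have : (monomial d (1 : K)) = X i * monomial (d - Finsupp.single i 1) 1 := by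
      rw [X_eq_monomial', monomial_mul, one_mul, hd]
    rw [this, pow_succ']
    exact Ideal.mul_mem_mul (X_mem_PC.2 hiC) (ih hwt)

theorem PC_pow_eq (C : Finset (Fin n)) (s : ℕ) :
    (PC K C) ^ s = Ideal.span ((fun d => monomial d (1 : K)) '' {d | s ≤ wtC C d}) := by
  apply le_antisymm
  · induction s with
    | zero =>
      rw [pow_zero, Ideal.one_eq_top, top_le_iff, Ideal.eq_top_iff_one]
      exact Ideal.subset_span ⟨0, by simp [wtC], by simp⟩
    | succ s ih =>
      rw [pow_succ]
      calc (PC K C) ^ s * PC K C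
          ≤ Ideal.span ((fun d => monomial d (1 : K)) '' {d | s ≤ wtC C d}) *
            Ideal.span ((fun d => monomial d (1 : K)) '' {d | 1 ≤ wtC C d}) := by
            apply Ideal.mul_mono ih
            apply Ideal.span_le.2
            rintro _ ⟨i, hi, rfl⟩
            exact Ideal.subset_span ⟨Finsupp.single i 1,
              by simp [Set.mem_setOf_eq, wtC_single hi], (X_eq_monomial' i).symm⟩
        _ ≤ Ideal.span ((fun d => monomial d (1 : K)) '' {d | s + 1 ≤ wtC C d}) := by
            rw [Ideal.span_mul_span']
            apply Ideal.span_le.2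
            rintro _ ⟨_, ⟨a, ha, rfl⟩, _, ⟨b, hb, rfl⟩, rfl⟩
            refine Ideal.subset_span ⟨a + b, ?_, by simp [monomial_mul]⟩
            have := wtC_add C a b
            simp only [Set.mem_setOf_eq] at ha hb ⊢
            omega
  · apply Ideal.span_le.2
    rintro _ ⟨d, hd, rfl⟩
    exact monomial_mem_PC_pow hd

theorem mem_PC_pow {C : Finset (Fin n)} {s : ℕ} {f : MvPolynomial (Fin n) K} :
    f ∈ (PC K C) ^ s ↔ ∀ m ∈ f.support, s ≤ wtC C m := by
  rw [PC_pow_eq, mem_ideal_span_monomial_image]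
  constructor
  · intro h m hm
    obtain ⟨d, hd, hdm⟩ := h m hm
    exact le_trans hd (wtC_mono hdm)
  · intro h m hm
    exact ⟨m, h m hm, le_refl m⟩

noncomputable def PhiC (K : Type) [Field K] {n : ℕ} (C : Finset (Fin n)) :
    MvPolynomial (Fin n) K →ₐ[K] Polynomial (MvPolynomial (Fin n) K) :=
  aeval (fun i => if i ∈ C then Polynomial.X * Polynomial.C (X i) else Polynomial.C (X i))

theorem PhiC_monomial (C : Finset (Fin n)) (m : Fin n →₀ ℕ) (c : K) :
    PhiC K C (monomial m c) = Polynomial.C (monomial m c) * Polynomial.X ^ (wtC C m) := by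
  classical
  rw [PhiC, aeval_monomial]
  have h1 : ∀ i ∈ m.support,
      (if i ∈ C then Polynomial.X * Polynomial.C (X i : MvPolynomial (Fin n) K)
        else Polynomial.C (X i)) ^ (m i)
      = Polynomial.X ^ (if i ∈ C then m i else 0) * Polynomial.C ((X i : MvPolynomial (Fin n) K) ^ (m i)) := by
    intro i _
    by_cases hi : i ∈ C
    · rw [if_pos hi, if_pos hi, mul_pow, map_pow]
    · rw [if_neg hi, if_neg hi, pow_zero, one_mul, map_pow]
  rw [Finsupp.prod, Finset.prod_congr rfl h1, Finset.prod_mul_distrib, ← map_prod,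
    Finset.prod_pow_eq_pow_sum]
  have h2 : (∑ i ∈ m.support, if i ∈ C then m i else 0) = wtC C m := by
    rw [Finset.sum_ite_mem, wtC]
    apply Finset.sum_subset (Finset.inter_subset_right)
    intro i _ hi
    simp only [Finset.mem_inter] at hi
    by_cases h : i ∈ m.support
    · exact absurd ⟨h, ‹i ∈ C›⟩ hi
    · simpa using h
  have h3 : (algebraMap K (Polynomial (MvPolynomial (Fin n) K))) c *
      Polynomial.C (∏ i ∈ m.support, (X i : MvPolynomial (Fin n) K) ^ (m i))
      = Polynomial.C (monomial m c) := by
    rw [Polynomial.algebraMap_apply, ← Polynomial.C_mul]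
    congr 1
    rw [monomial_eq, Finsupp.prod]
    rfl
  rw [h2]
  calc (algebraMap K (Polynomial (MvPolynomial (Fin n) K))) c *
      (Polynomial.X ^ wtC C m * Polynomial.C (∏ i ∈ m.support, (X i : MvPolynomial (Fin n) K) ^ (m i)))
      = ((algebraMap K (Polynomial (MvPolynomial (Fin n) K))) c *
        Polynomial.C (∏ i ∈ m.support, (X i : MvPolynomial (Fin n) K) ^ (m i))) * Polynomial.X ^ wtC C m := by
        ring
    _ = Polynomial.C (monomial m c) * Polynomial.X ^ wtC C m := by rw [h3]

theorem coeff_coeff_PhiC (C : Finset (Fin n)) (f : MvPolynomial (Fin n) K) (d : ℕ)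
    (m : Fin n →₀ ℕ) :
    MvPolynomial.coeff m ((PhiC K C f).coeff d) =
      if wtC C m = d then MvPolynomial.coeff m f else 0 := by
  classical
  induction f using MvPolynomial.induction_on' with
  | monomial m' c =>
    rw [PhiC_monomial, Polynomial.coeff_C_mul, Polynomial.coeff_X_pow]
    by_cases hm : m' = m
    · subst hm
      by_cases hw : wtC C m' = d
      · simp [hw, coeff_monomial]
      · have h' : ¬ d = wtC C m' := fun h => hw h.symm
        simp [hw, h', coeff_monomial]
    · by_cases hw : d = wtC C m' <;> by_cases hw2 : wtC C m = d <;>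
        simp [hw, hw2, coeff_monomial, hm]
  | add p q hp hq =>
    rw [map_add, Polynomial.coeff_add, coeff_add, hp, hq]
    by_cases hw : wtC C m = d <;> simp [hw, coeff_add]

theorem mem_PC_pow_iff_coeff {C : Finset (Fin n)} {s : ℕ} {f : MvPolynomial (Fin n) K} :
    f ∈ (PC K C) ^ s ↔ ∀ d < s, (PhiC K C f).coeff d = 0 := by
  rw [mem_PC_pow]
  constructor
  · intro h d hd
    apply MvPolynomial.ext
    intro m
    rw [coeff_coeff_PhiC, coeff_zero]
    by_cases hw : wtC C m = d
    · rw [if_pos hw]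
      by_contra hc
      have := h m (mem_support_iff.2 hc)
      omega
    · rw [if_neg hw]
  · intro h m hm
    by_contra hc
    push_neg at hc
    have := h (wtC C m) hc
    have h2 := coeff_coeff_PhiC C f (wtC C m) m
    rw [this, coeff_zero, if_pos rfl] at h2
    exact (mem_support_iff.1 hm) h2.symm

theorem PhiC_ne_zero {C : Finset (Fin n)} {f : MvPolynomial (Fin n) K} (hf : f ≠ 0) :
    PhiC K C f ≠ 0 := by
  intro h
  apply hf
  apply MvPolynomial.ext
  intro m
  have h2 := coeff_coeff_PhiC C f (wtC C m) m
  rw [h, Polynomial.coeff_zero, coeff_zero, if_pos rfl] at h2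
  rw [coeff_zero, ← h2]

theorem mem_PC_iff_coeff {C : Finset (Fin n)} {f : MvPolynomial (Fin n) K} :
    f ∈ PC K C ↔ (PhiC K C f).coeff 0 = 0 := by
  rw [← pow_one (PC K C), mem_PC_pow_iff_coeff]
  constructor
  · intro h
    exact h 0 one_pos
  · intro h d hd
    interval_cases d
    exact h

theorem PC_isPrime (C : Finset (Fin n)) : (PC K C).IsPrime := by
  constructor
  · intro h
    have h1 : (1 : MvPolynomial (Fin n) K) ∈ PC K C := h ▸ Submodule.mem_top
    rw [mem_PC_iff_coeff, map_one, Polynomial.coeff_one_zero] at h1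
    exact one_ne_zero h1
  · intro a b hab
    rw [mem_PC_iff_coeff, map_mul, Polynomial.mul_coeff_zero] at hab
    rcases mul_eq_zero.1 hab with h | h
    · exact Or.inl (mem_PC_iff_coeff.2 h)
    · exact Or.inr (mem_PC_iff_coeff.2 h)

theorem PC_pow_primary {C : Finset (Fin n)} {s : ℕ} {u f : MvPolynomial (Fin n) K}
    (hu : u ∉ PC K C) (huf : u * f ∈ (PC K C) ^ s) : f ∈ (PC K C) ^ s := by
  by_cases hf : f = 0
  · subst hf; exact Ideal.zero_mem _
  have hu0 : u ≠ 0 := fun h => hu (h ▸ Ideal.zero_mem _)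
  have hPu : (PhiC K C u) ≠ 0 := PhiC_ne_zero hu0
  have hPf : (PhiC K C f) ≠ 0 := PhiC_ne_zero hf
  have htu : (PhiC K C u).trailingDegree = 0 := by
    rw [Polynomial.trailingDegree_eq_zero]
    intro h
    exact hu (mem_PC_iff_coeff.2 h)
  have hts : (s : ℕ∞) ≤ (PhiC K C (u * f)).trailingDegree := by
    have huf0 : u * f ≠ 0 := mul_ne_zero hu0 hf
    have hP : (PhiC K C (u * f)) ≠ 0 := PhiC_ne_zero huf0
    rw [Polynomial.trailingDegree_eq_natTrailingDegree hP, Nat.cast_le]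
    by_contra hc
    push_neg at hc
    have := (mem_PC_pow_iff_coeff.1 huf) _ hc
    exact (Polynomial.coeff_natTrailingDegree_ne_zero.2 hP) this
  rw [map_mul, Polynomial.trailingDegree_mul, htu, zero_add] at hts
  rw [mem_PC_pow_iff_coeff]
  intro d hd
  apply Polynomial.coeff_eq_zero_of_lt_trailingDegree
  exact lt_of_lt_of_le (by exact_mod_cast hd) hts

theorem edgeIdeal_le_PC {G : SimpleGraph (Fin n)} {C : Finset (Fin n)}
    (h : ∀ i j, G.Adj i j → i ∈ C ∨ j ∈ C) : edgeIdeal K G ≤ PC K C := by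
  apply Ideal.span_le.2
  rintro _ ⟨i, j, hadj, rfl⟩
  rcases h i j hadj with hi | hj
  · exact Ideal.mul_mem_right _ _ (X_mem_PC.2 hi)
  · exact Ideal.mul_mem_left _ _ (X_mem_PC.2 hj)

theorem minimalPrime_structure {G : SimpleGraph (Fin n)} {p : Ideal (MvPolynomial (Fin n) K)}
    (hp : p ∈ (edgeIdeal K G).minimalPrimes) :
    ∃ C : Finset (Fin n), (∀ i j, G.Adj i j → i ∈ C ∨ j ∈ C) ∧
      (∀ i ∈ C, ∃ j, G.Adj i j ∧ j ∉ C) ∧ p = PC K C := by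
  classical
  haveI hpr : p.IsPrime := hp.1.1
  set C : Finset (Fin n) := Finset.univ.filter (fun i => X i ∈ p) with hC
  have hmemC : ∀ i, i ∈ C ↔ (X i : MvPolynomial (Fin n) K) ∈ p := by
    intro i; simp [hC]
  have hcov : ∀ i j, G.Adj i j → i ∈ C ∨ j ∈ C := by
    intro i j hadj
    have : (X i * X j : MvPolynomial (Fin n) K) ∈ p :=
      hp.1.2 (Ideal.subset_span ⟨i, j, hadj, rfl⟩)
    rcases hpr.mem_or_mem this with h | h
    · exact Or.inl ((hmemC i).2 h)
    · exact Or.inr ((hmemC j).2 h)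
  have hPCle : PC K C ≤ p := by
    apply Ideal.span_le.2
    rintro _ ⟨i, hi, rfl⟩
    exact (hmemC i).1 hi
  have hpeq : p = PC K C :=
    le_antisymm (hp.2 ⟨PC_isPrime C, edgeIdeal_le_PC hcov⟩ hPCle) hPCle
  refine ⟨C, hcov, ?_, hpeq⟩
  intro i hiC
  by_contra hc
  push_neg at hc
  -- then C.erase i is also a vertex cover
  have hcov' : ∀ a b, G.Adj a b → a ∈ C.erase i ∨ b ∈ C.erase i := by
    intro a b hadj
    rcases hcov a b hadj with ha | hb
    · by_cases hai : a = i
      · subst hai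
        have hbC : b ∈ C := hc b hadj
        exact Or.inr (Finset.mem_erase.2 ⟨fun h => G.loopless.irrefl a (h ▸ hadj), hbC⟩)
      · exact Or.inl (Finset.mem_erase.2 ⟨hai, ha⟩)
    · by_cases hbi : b = i
      · subst hbi
        have haC : a ∈ C := hc a hadj.symm
        exact Or.inl (Finset.mem_erase.2 ⟨fun h => G.loopless.irrefl b (h ▸ hadj), haC⟩)
      · exact Or.inr (Finset.mem_erase.2 ⟨hbi, hb⟩)
  have hle : PC K (C.erase i) ≤ p := le_trans (Ideal.span_mono (by
    apply Set.image_mono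
    exact_mod_cast Finset.erase_subset i C)) hPCle
  have := hp.2 ⟨PC_isPrime (C.erase i), edgeIdeal_le_PC hcov'⟩ hle
  have hXi : (X i : MvPolynomial (Fin n) K) ∈ PC K (C.erase i) := this ((hmemC i).1 hiC)
  have := X_mem_PC.1 hXi
  exact (Finset.notMem_erase i C) this

theorem key_mul_monomial {G : SimpleGraph (Fin n)} {C : Finset (Fin n)} {j : Fin n → Fin n}
    (hj : ∀ i ∈ C, G.Adj i (j i) ∧ j i ∉ C) :
    ∀ (s t : ℕ), s ≤ t → ∀ m : Fin n →₀ ℕ, s ≤ wtC C m →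
      (∏ i ∈ C, X (j i)) ^ t * monomial m (1 : K) ∈ (edgeIdeal K G) ^ s := by
  intro s
  induction s with
  | zero => intro t _ m _; simp
  | succ s ih =>
    intro t hst m hm
    obtain ⟨t', rfl⟩ : ∃ t', t = t' + 1 := ⟨t - 1, by omega⟩
    obtain ⟨i₀, hi₀C, hi₀⟩ : ∃ i ∈ C, m i ≠ 0 := by
      by_contra hc
      push_neg at hc
      have : wtC C m = 0 := Finset.sum_eq_zero hc
      omega
    have hle : Finsupp.single i₀ 1 ≤ m := by rw [Finsupp.single_le_iff]; omega
    have hd : Finsupp.single i₀ 1 + (m - Finsupp.single i₀ 1) = m := add_tsub_cancel_of_le hle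
    have hwt : s ≤ wtC C (m - Finsupp.single i₀ 1) := by
      have h2 := wtC_add C (Finsupp.single i₀ 1) (m - Finsupp.single i₀ 1)
      rw [hd, wtC_single hi₀C] at h2
      omega
    have e2 : monomial m (1 : K) = X i₀ * monomial (m - Finsupp.single i₀ 1) 1 := by
      rw [X_eq_monomial', monomial_mul, one_mul, hd]
    have e1 : (∏ i ∈ C, (X (j i) : MvPolynomial (Fin n) K)) =
        X (j i₀) * ∏ i ∈ C.erase i₀, X (j i) := (Finset.mul_prod_erase C _ hi₀C).symm
    have calc1 : (∏ i ∈ C, (X (j i) : MvPolynomial (Fin n) K)) ^ (t' + 1) * monomial m 1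
        = (X i₀ * X (j i₀)) *
          ((∏ i ∈ C.erase i₀, X (j i)) *
            ((∏ i ∈ C, X (j i)) ^ t' * monomial (m - Finsupp.single i₀ 1) 1)) := by
      rw [pow_succ, e2]
      rw [e1]
      ring
    rw [calc1, pow_succ']
    refine Ideal.mul_mem_mul ?_ (Ideal.mul_mem_left _ _ (ih t' (by omega) _ hwt))
    exact Ideal.subset_span ⟨i₀, j i₀, (hj i₀ hi₀C).1, rfl⟩

theorem exists_mul_mem_iff_mem_pow {G : SimpleGraph (Fin n)}
    {p : Ideal (MvPolynomial (Fin n) K)} (hp : p ∈ (edgeIdeal K G).minimalPrimes)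
    (s : ℕ) (f : MvPolynomial (Fin n) K) :
    (∃ u ∉ p, u * f ∈ (edgeIdeal K G) ^ s) ↔ f ∈ p ^ s := by
  classical
  haveI hpr : p.IsPrime := hp.1.1
  obtain ⟨C, hcov, hmin, rfl⟩ := minimalPrime_structure hp
  rcases Nat.eq_zero_or_pos s with rfl | hs
  · simp only [pow_zero, Ideal.one_eq_top]
    refine ⟨fun _ => Submodule.mem_top, fun _ => ⟨1, ?_, Submodule.mem_top⟩⟩
    intro h1
    exact (PC_isPrime C).ne_top ((Ideal.eq_top_iff_one _).2 h1)
  constructor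
  · rintro ⟨u, hu, huf⟩
    have h1 : u * f ∈ (PC K C) ^ s :=
      Ideal.pow_right_mono (edgeIdeal_le_PC hcov) s huf
    exact PC_pow_primary hu h1
  · intro hf
    set j : Fin n → Fin n := fun i => if h : i ∈ C then (hmin i h).choose else i with hjdef
    have hj : ∀ i ∈ C, G.Adj i (j i) ∧ j i ∉ C := by
      intro i hi
      simp only [hjdef, dif_pos hi]
      exact ⟨((hmin i hi).choose_spec).1, ((hmin i hi).choose_spec).2⟩
    set u : MvPolynomial (Fin n) K := (∏ i ∈ C, X (j i)) ^ s with hudef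
    have hu : u ∉ PC K C := by
      rw [hudef]
      intro hmem
      haveI : (PC K C).IsPrime := PC_isPrime C
      rw [(PC_isPrime C).pow_mem_iff_mem s hs, Ideal.IsPrime.prod_mem_iff] at hmem
      obtain ⟨i, hi, hXi⟩ := hmem
      exact (hj i hi).2 (X_mem_PC.1 hXi)
    refine ⟨u, hu, ?_⟩
    have hcolon : (PC K C) ^ s ≤ ((edgeIdeal K G) ^ s).colon (Ideal.span {u}) := by
      rw [PC_pow_eq]
      apply Ideal.span_le.2
      rintro _ ⟨d, hd, rfl⟩
      rw [SetLike.mem_coe, Ideal.mem_colon_span_singleton, mul_comm]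
      exact key_mul_monomial hj s s le_rfl d hd
    have := hcolon hf
    rw [Ideal.mem_colon_span_singleton] at this
    rwa [mul_comm]

theorem mem_symbolicPower_edgeIdeal {G : SimpleGraph (Fin n)} {s : ℕ}
    {f : MvPolynomial (Fin n) K} :
    f ∈ symbolicPower (edgeIdeal K G) s ↔
      ∀ p ∈ (edgeIdeal K G).minimalPrimes, f ∈ p ^ s := by
  rw [mem_symbolicPower_iff]
  exact forall₂_congr fun p hp => exists_mul_mem_iff_mem_pow hp s f

theorem edgeIdeal_mono {G G' : SimpleGraph (Fin n)} (h : G' ≤ G) :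
    edgeIdeal K G' ≤ edgeIdeal K G := by
  apply Ideal.span_mono
  rintro _ ⟨i, j, hadj, rfl⟩
  exact ⟨i, j, h hadj, rfl⟩

theorem symbolicPower_edgeIdeal_mono {G G' : SimpleGraph (Fin n)} (h : G' ≤ G) (s : ℕ) :
    symbolicPower (edgeIdeal K G') s ≤ symbolicPower (edgeIdeal K G) s := by
  intro f hf
  rw [mem_symbolicPower_edgeIdeal] at hf ⊢
  intro p hp
  haveI : p.IsPrime := hp.1.1
  obtain ⟨q, hq, hqp⟩ := Ideal.exists_minimalPrimes_le
    (le_trans (edgeIdeal_mono h) hp.1.2 : edgeIdeal K G' ≤ p)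
  exact Ideal.pow_right_mono hqp s (hf q hq)

theorem hard_direction {G : SimpleGraph (Fin n)} {x y : Fin n} (hxy : G.Adj x y) (s : ℕ)
    {f : MvPolynomial (Fin n) K} (hf : f ∈ symbolicPower (edgeIdeal K G) s) :
    f ∈ symbolicPower (edgeIdeal K (G.deleteEdges {s(x, y)})) s ⊔
      Ideal.span {(X x * X y : MvPolynomial (Fin n) K)} := by
  classical
  have hxyne : x ≠ y := hxy.ne
  rw [mem_symbolicPower_edgeIdeal] at hf
  set pred : (Fin n →₀ ℕ) → Prop := fun m => m x ≠ 0 ∧ m y ≠ 0 with hpred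
  set f₁ : MvPolynomial (Fin n) K :=
    ∑ m ∈ f.support.filter (fun m => ¬ pred m), monomial m (coeff m f) with hf₁
  set f₂ : MvPolynomial (Fin n) K :=
    ∑ m ∈ f.support.filter (fun m => pred m), monomial m (coeff m f) with hf₂
  have hsplit : f = f₁ + f₂ := by
    rw [hf₁, hf₂, add_comm, Finset.sum_filter_add_sum_filter_not f.support pred,
      support_sum_monomial_coeff]
  -- f₂ ∈ (xy)
  have hf₂mem : f₂ ∈ Ideal.span {(X x * X y : MvPolynomial (Fin n) K)} := by
    rw [hf₂]
    apply Ideal.sum_mem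
    intro m hm
    rw [Finset.mem_filter] at hm
    obtain ⟨hmf, hmx, hmy⟩ := hm
    rw [Ideal.mem_span_singleton]
    have hle : Finsupp.single x 1 + Finsupp.single y 1 ≤ m := by
      rw [Finsupp.le_iff]
      intro i _
      rw [Finsupp.add_apply, Finsupp.single_apply, Finsupp.single_apply]
      by_cases hix : x = i
      · subst hix
        rw [if_pos rfl, if_neg (fun h => hxyne h.symm)]
        omega
      · by_cases hiy : y = i
        · subst hiy
          rw [if_neg hix, if_pos rfl]
          omega
        · rw [if_neg hix, if_neg hiy]
          omega
    refine ⟨monomial (m - (Finsupp.single x 1 + Finsupp.single y 1)) (coeff m f), ?_⟩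
    rw [X_eq_monomial', X_eq_monomial', monomial_mul, one_mul, monomial_mul, one_mul,
      add_tsub_cancel_of_le hle]
  -- support of f₁
  have hf₁supp : ∀ m ∈ f₁.support, m ∈ f.support ∧ ¬ pred m := by
    intro m hm
    have h1 := MvPolynomial.support_sum hm
    rw [Finset.mem_biUnion] at h1
    obtain ⟨m', hm', hmm'⟩ := h1
    have := support_monomial_subset hmm'
    rw [Finset.mem_singleton] at this
    subst this
    rw [Finset.mem_filter] at hm'
    exact ⟨hm'.1, hm'.2⟩
  -- the pow membership of f transfers to covers of G
  have hfpow : ∀ D : Finset (Fin n), (∀ i j, G.Adj i j → i ∈ D ∨ j ∈ D) →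
      ∀ m ∈ f.support, s ≤ wtC D m := by
    intro D hD m hm
    haveI : (PC K D).IsPrime := PC_isPrime D
    obtain ⟨p, hp, hple⟩ := Ideal.exists_minimalPrimes_le (J := PC K D) (edgeIdeal_le_PC hD)
    have : f ∈ (PC K D) ^ s := Ideal.pow_right_mono hple s (hf p hp)
    exact mem_PC_pow.1 this m hm
  have hf₁mem : f₁ ∈ symbolicPower (edgeIdeal K (G.deleteEdges {s(x, y)})) s := by
    rw [mem_symbolicPower_edgeIdeal]
    intro q hq
    obtain ⟨D, hDcov, -, rfl⟩ := minimalPrime_structure hq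
    rw [mem_PC_pow]
    intro m hm
    obtain ⟨hmf, hmp⟩ := hf₁supp m hm
    -- edges of G other than xy are edges of the deleted graph
    have hGedge : ∀ i j : Fin n, G.Adj i j → s(i, j) ≠ s(x, y) → i ∈ D ∨ j ∈ D := by
      intro i j hadj hne
      exact hDcov i j (by rw [SimpleGraph.deleteEdges_adj]; exact ⟨hadj, by simpa using hne⟩)
    by_cases hxD : x ∈ D
    · -- D covers G
      refine hfpow D ?_ m hmf
      intro i j hadj
      by_cases he : s(i, j) = s(x, y)
      · rcases Sym2.eq_iff.1 he with ⟨rfl, rfl⟩ | ⟨rfl, rfl⟩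
        · exact Or.inl hxD
        · exact Or.inr hxD
      · exact hGedge i j hadj he
    · by_cases hyD : y ∈ D
      · refine hfpow D ?_ m hmf
        intro i j hadj
        by_cases he : s(i, j) = s(x, y)
        · rcases Sym2.eq_iff.1 he with ⟨rfl, rfl⟩ | ⟨rfl, rfl⟩
          · exact Or.inr hyD
          · exact Or.inl hyD
        · exact hGedge i j hadj he
      · -- x, y ∉ D : use the covers D ∪ {x} and D ∪ {y}
        have hcovx : ∀ i j, G.Adj i j → i ∈ insert x D ∨ j ∈ insert x D := by
          intro i j hadj
          by_cases he : s(i, j) = s(x, y)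
          · rcases Sym2.eq_iff.1 he with ⟨hi, hj⟩ | ⟨hi, hj⟩
            · exact Or.inl (by rw [hi]; exact Finset.mem_insert_self x D)
            · exact Or.inr (by rw [hj]; exact Finset.mem_insert_self x D)
          · rcases hGedge i j hadj he with h | h
            · exact Or.inl (Finset.mem_insert_of_mem h)
            · exact Or.inr (Finset.mem_insert_of_mem h)
        have hcovy : ∀ i j, G.Adj i j → i ∈ insert y D ∨ j ∈ insert y D := by
          intro i j hadj
          by_cases he : s(i, j) = s(x, y)
          · rcases Sym2.eq_iff.1 he with ⟨hi, hj⟩ | ⟨hi, hj⟩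
            · exact Or.inr (by rw [hj]; exact Finset.mem_insert_self y D)
            · exact Or.inl (by rw [hi]; exact Finset.mem_insert_self y D)
          · rcases hGedge i j hadj he with h | h
            · exact Or.inl (Finset.mem_insert_of_mem h)
            · exact Or.inr (Finset.mem_insert_of_mem h)
        have hwx : s ≤ wtC (insert x D) m := hfpow _ hcovx m hmf
        have hwy : s ≤ wtC (insert y D) m := hfpow _ hcovy m hmf
        have hx0 : m x = 0 ∨ m y = 0 := by
          have hmp : ¬ (m x ≠ 0 ∧ m y ≠ 0) := hmp
          push_neg at hmp
          by_cases h : m x = 0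
          · exact Or.inl h
          · exact Or.inr (hmp h)
        have hix : wtC (insert x D) m = m x + wtC D m := by
          rw [wtC, Finset.sum_insert hxD]; rfl
        have hiy : wtC (insert y D) m = m y + wtC D m := by
          rw [wtC, Finset.sum_insert hyD]; rfl
        rcases hx0 with h | h
        · omega
        · omega
  rw [hsplit]
  exact Submodule.add_mem _ (Submodule.mem_sup_left hf₁mem) (Submodule.mem_sup_right hf₂mem)

theorem main_statement {G : SimpleGraph (Fin n)} {x y : Fin n} (hxy : G.Adj x y) (s : ℕ) :
    symbolicPower (edgeIdeal K G) s +
        Ideal.span {(X x * X y : MvPolynomial (Fin n) K)} =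
      symbolicPower (edgeIdeal K (G.deleteEdges {s(x, y)})) s +
        Ideal.span {(X x * X y : MvPolynomial (Fin n) K)} := by
  apply le_antisymm
  · rw [Submodule.add_eq_sup, Submodule.add_eq_sup]
    apply sup_le
    · intro f hf
      exact hard_direction hxy s hf
    · exact le_sup_right
  · rw [Submodule.add_eq_sup, Submodule.add_eq_sup]
    exact sup_le_sup_right
      (symbolicPower_edgeIdeal_mono (SimpleGraph.deleteEdges_le _) s) _

/-- Let `xy` be an edge of `G` and `G'` be the graph obtained from `G`
by deleting the edge `xy`.  Then for every `s ≥ 1`,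
`I(G)^{(s)} + (xy) = I(G')^{(s)} + (xy)`. -/
theorem symbolicPower_add_span_deleteEdge
    {K : Type} [Field K] {n : ℕ} (G : SimpleGraph (Fin n)) (x y : Fin n)
    (hxy : G.Adj x y) (s : ℕ) (hs : 1 ≤ s) :
    symbolicPower (edgeIdeal K G) s +
        Ideal.span {(X x * X y : MvPolynomial (Fin n) K)} =
      symbolicPower (edgeIdeal K (G.deleteEdges {s(x, y)})) s +
        Ideal.span {(X x * X y : MvPolynomial (Fin n) K)} := by
  exact main_statement hxy s
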